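/- Let X be a complete metric space with |X| > 𝔠 and let {D_α : α < 𝔠} be a family of non-empty closed nowhere dense subsets of X. Then there exists a closed subset Ω ⊆ X with |Ω| ≤ 𝔠 such that for every α < 𝔠, the set D_α ∩ Ω is non-empty and nowhere dense in Ω. -/

import Mathlib

open scoped ENNReal Cardinal

/-- An ideal on ℕ containing all finite sets, closed under subsets and finite
unions, with `ℕ ∉ I`. -/
def IsIdealOn (I : Set (Set ℕ)) : Prop :=
  Set.univ ∉ I ∧ (∀ A ∈ I, ∀ B, B ⊆ A → B ∈ I) ∧
    (∀ A ∈ I, ∀ B ∈ I, A ∪ B ∈ I) ∧ (∀ A : Set ℕ, A.Finite → A ∈ I)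

/-- `β` is a basis of the ideal `I`: a cofinal (under inclusion) subfamily. -/
def IsIdealBasis (I β : Set (Set ℕ)) : Prop := β ⊆ I ∧ ∀ A ∈ I, ∃ B ∈ β, A ⊆ B

/-- `I` is a Baire ideal for the topological space `X`: for every monotone family of
nowhere dense subsets of `X` indexed by `I`, the union is not all of `X`. -/
def IsBaireIdealFor (I : Set (Set ℕ)) (X : Type*) [TopologicalSpace X] : Prop :=
  ∀ f : Set ℕ → Set X, (∀ A ∈ I, IsNowhereDense (f A)) →
    (∀ A ∈ I, ∀ B ∈ I, A ⊆ B → f A ⊆ f B) → (⋃ A ∈ I, f A) ≠ Set.univ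

/-- If `X` is a complete metric space with `|X| > 𝔠` and `{D_α : α < 𝔠}` are nonempty
closed nowhere dense subsets, there is a closed `Ω ⊆ X` with `|Ω| ≤ 𝔠` meeting each
`D_α` in a nonempty set which is nowhere dense in the subspace `Ω`. -/
theorem stmt_8 (X : Type) [MetricSpace X] [CompleteSpace X]
    (hX : Cardinal.continuum < Cardinal.mk X)
    (ι : Type) (hι : Cardinal.mk ι = Cardinal.continuum)
    (D : ι → Set X) (hne : ∀ α, (D α).Nonempty) (hcl : ∀ α, IsClosed (D α))
    (hnwd : ∀ α, IsNowhereDense (D α)) :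
    ∃ Ω : Set X, IsClosed Ω ∧ Cardinal.mk Ω ≤ Cardinal.continuum ∧
      ∀ α, (D α ∩ Ω).Nonempty ∧
        IsNowhereDense ((Subtype.val ⁻¹' D α : Set Ω)) := by
  classical
  have hdense : ∀ α, Dense (D α)ᶜ := by
    intro α
    rw [← interior_eq_empty_iff_dense_compl]
    exact ((hcl α).isNowhereDense_iff).1 (hnwd α)
  have hy : ∀ (p : X) (α : ι) (k : ℕ), ∃ q, q ∉ D α ∧ dist q p < 1 / (k + 1) := by
    intro p α k
    have hp : p ∈ closure (D α)ᶜ := (hdense α) p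
    rw [Metric.mem_closure_iff] at hp
    obtain ⟨q, hq, hlt⟩ := hp (1 / (k + 1)) (by positivity)
    exact ⟨q, hq, by rwa [dist_comm]⟩
  choose y hy1 hy2 using hy
  choose x0 hx0 using hne
  -- the increasing family of sets
  let step : Set X → Set X := fun s =>
    s ∪ Set.range (fun t : ↥s × ι × ℕ => y t.1.val t.2.1 t.2.2)
  let F : ℕ → Set X := fun n => Nat.rec (Set.range x0) (fun _ s => step s) n
  have hF0 : F 0 = Set.range x0 := rfl
  have hFsucc : ∀ n, F (n + 1) = step (F n) := fun _ => rfl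
  let S : Set X := ⋃ n, F n
  have hFS : ∀ n, F n ⊆ S := fun n => Set.subset_iUnion F n
  -- cardinality of each F n
  have hcard : ∀ n, Cardinal.mk ↥(F n) ≤ Cardinal.continuum := by
    intro n
    induction n with
    | zero =>
      rw [hF0]
      calc Cardinal.mk ↥(Set.range x0) ≤ Cardinal.mk ι := Cardinal.mk_range_le
        _ = Cardinal.continuum := hι
    | succ n ih =>
      rw [hFsucc]
      refine le_trans (Cardinal.mk_union_le _ _) ?_
      have h2 : Cardinal.mk (Set.range (fun t : ↥(F n) × ι × ℕ => y t.1.val t.2.1 t.2.2))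
          ≤ Cardinal.continuum := by
        refine le_trans Cardinal.mk_range_le ?_
        rw [Cardinal.mk_prod, Cardinal.mk_prod, Cardinal.lift_id, Cardinal.lift_id,
          Cardinal.lift_id, Cardinal.lift_id, hι, Cardinal.mk_nat]
        calc Cardinal.mk ↥(F n) * (Cardinal.continuum * Cardinal.aleph0)
            ≤ Cardinal.continuum * (Cardinal.continuum * Cardinal.aleph0) := by
              exact mul_le_mul_left ih _
          _ = Cardinal.continuum := by
              rw [Cardinal.continuum_mul_aleph0, Cardinal.continuum_mul_self]
      calc Cardinal.mk ↥(F n) + _ ≤ Cardinal.continuum + Cardinal.continuum :=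
            add_le_add ih h2
        _ = Cardinal.continuum := by simp
  have hScard : Cardinal.mk ↥S ≤ Cardinal.continuum := by
    refine le_trans (Cardinal.mk_iUnion_le F) ?_
    rw [Cardinal.mk_nat]
    calc Cardinal.aleph0 * ⨆ n, Cardinal.mk ↥(F n)
        ≤ Cardinal.continuum * Cardinal.continuum := by
          refine mul_le_mul' Cardinal.aleph0_le_continuum (ciSup_le' hcard)
      _ = Cardinal.continuum := Cardinal.continuum_mul_self
  refine ⟨closure S, isClosed_closure, ?_, ?_⟩
  · -- cardinality of the closure
    have hg : ∀ z : closure S, ∀ n : ℕ, ∃ q : S, dist (q : X) (z : X) < 1 / (n + 1) := by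
      rintro ⟨z, hz⟩ n
      rw [Metric.mem_closure_iff] at hz
      obtain ⟨q, hq, hlt⟩ := hz (1 / (n + 1)) (by positivity)
      exact ⟨⟨q, hq⟩, by rwa [dist_comm]⟩
    choose g hg using hg
    have hginj : Function.Injective g := by
      intro z w hzw
      have : dist (z : X) (w : X) = 0 := by
        by_contra hd
        have hd' : 0 < dist (z : X) (w : X) :=
          lt_of_le_of_ne dist_nonneg (Ne.symm hd)
        obtain ⟨n, hn⟩ := exists_nat_one_div_lt (half_pos hd')
        have h1 := hg z n
        have h2 := hg w n
        rw [hzw] at h1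
        have : dist (z : X) (w : X) < 1 / (n + 1) + 1 / (n + 1) := by
          calc dist (z : X) (w : X)
              ≤ dist (z : X) (g w n : X) + dist (g w n : X) (w : X) := dist_triangle _ _ _
            _ < 1 / (n + 1) + 1 / (n + 1) := by
                rw [dist_comm (z : X)]
                exact add_lt_add h1 h2
        have : dist (z : X) (w : X) < dist (z : X) (w : X) / 2 + dist (z : X) (w : X) / 2 :=
          this.trans (add_lt_add hn hn)
        rw [add_halves] at this
        exact lt_irrefl _ this
      have := dist_eq_zero.1 this
      exact Subtype.ext this
    calc Cardinal.mk ↥(closure S) ≤ Cardinal.mk (ℕ → S) := Cardinal.mk_le_of_injective hginj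
      _ = Cardinal.mk ↥S ^ Cardinal.aleph0 := by
          rw [Cardinal.mk_arrow, Cardinal.lift_id, Cardinal.lift_id, Cardinal.mk_nat]
      _ ≤ Cardinal.continuum ^ Cardinal.aleph0 := Cardinal.power_le_power_right hScard
      _ = Cardinal.continuum := Cardinal.continuum_power_aleph0
  · intro α
    constructor
    · exact ⟨x0 α, hx0 α, subset_closure (hFS 0 ⟨α, rfl⟩)⟩
    · -- nowhere dense in the subspace
      have hclsub : IsClosed (Subtype.val ⁻¹' D α : Set (closure S)) :=
        (hcl α).preimage continuous_subtype_val
      rw [hclsub.isNowhereDense_iff]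
      rw [Set.eq_empty_iff_forall_notMem]
      rintro z hz
      obtain ⟨ε, hε, hball⟩ := Metric.isOpen_iff.1 isOpen_interior z hz
      obtain ⟨p, hpS, hpd⟩ : ∃ p ∈ S, dist p (z : X) < ε / 2 := by
        have hz' := z.2
        rw [Metric.mem_closure_iff] at hz'
        obtain ⟨p, hp, hlt⟩ := hz' (ε / 2) (half_pos hε)
        exact ⟨p, hp, by rwa [dist_comm]⟩
      obtain ⟨n, hpn⟩ := Set.mem_iUnion.1 hpS
      obtain ⟨k, hk⟩ := exists_nat_one_div_lt (half_pos hε)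
      have hqS : y p α k ∈ S := by
        refine hFS (n + 1) ?_
        rw [hFsucc]
        exact Or.inr ⟨⟨⟨p, hpn⟩, α, k⟩, rfl⟩
      set q : closure S := ⟨y p α k, subset_closure hqS⟩ with hq
      have hqball : q ∈ Metric.ball z ε := by
        rw [Metric.mem_ball]
        have : dist (q : X) (z : X) < ε := by
          calc dist (q : X) (z : X) ≤ dist (q : X) p + dist p (z : X) := dist_triangle _ _ _
            _ < 1 / (k + 1) + ε / 2 := add_lt_add (hy2 p α k) hpd
            _ < ε / 2 + ε / 2 := by exact add_lt_add_left hk _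
            _ = ε := add_halves ε
        exact this
      have : q ∈ (Subtype.val ⁻¹' D α : Set (closure S)) :=
        interior_subset (hball hqball)
      exact hy1 p α k this
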